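/- (Dual certificate optimality) Let D = L₀ + S₀ with L₀ = UΣV* a reduced SVD, T = {UX* + YV*}, Ω = supp(S₀). Assume λ < 1 − α and ‖P_Ω P_T‖ ≤ 1 − ε for some α, ε ∈ (0,1) with 1/2 − (1−ε)ε > 0 and (1−α) − λε > 0. If there exists a pair (W, F) with P_T W = 0, ‖W‖ ≤ α, P_Ω F = 0, ‖F‖_∞ ≤ 1/2, and a matrix Δ = P_Ω Δ with ‖Δ‖_F ≤ ε² such that UV* + W = λ(sgn(S₀) + F + Δ), then (L₀, S₀) is the unique minimizer of ‖L‖_* + λ‖S‖₁ subject to L + S = D. -/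

import Mathlib

open Matrix

noncomputable def frobInner {n : ℕ} (A B : Matrix (Fin n) (Fin n) ℝ) : ℝ :=
  Matrix.trace (Aᵀ * B)

noncomputable def matSpectralNorm {n : ℕ} (A : Matrix (Fin n) (Fin n) ℝ) : ℝ :=
  ‖Matrix.toEuclideanCLM (𝕜 := ℝ) A‖

noncomputable def nuclearNorm {n : ℕ} (A : Matrix (Fin n) (Fin n) ℝ) : ℝ :=
  ∑ i, Real.sqrt ((Matrix.isHermitian_conjTranspose_mul_self A).eigenvalues i)

noncomputable def l1Norm {n : ℕ} (A : Matrix (Fin n) (Fin n) ℝ) : ℝ :=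
  ∑ i, ∑ j, |A i j|

noncomputable def signMatrix {n : ℕ} (A : Matrix (Fin n) (Fin n) ℝ) :
    Matrix (Fin n) (Fin n) ℝ :=
  Matrix.of fun i j => Real.sign (A i j)

def projSupp {n : ℕ} (Ω : Set (Fin n × Fin n)) [DecidablePred (· ∈ Ω)]
    (M : Matrix (Fin n) (Fin n) ℝ) : Matrix (Fin n) (Fin n) ℝ :=
  Matrix.of fun i j => if (i, j) ∈ Ω then M i j else 0

def projT {n r : ℕ} (U V : Matrix (Fin n) (Fin r) ℝ)
    (M : Matrix (Fin n) (Fin n) ℝ) : Matrix (Fin n) (Fin n) ℝ :=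
  U * Uᵀ * M + M * (V * Vᵀ) - U * Uᵀ * M * (V * Vᵀ)


noncomputable def frobNorm {n : ℕ} (A : Matrix (Fin n) (Fin n) ℝ) : ℝ :=
  Real.sqrt (∑ i, ∑ j, (A i j) ^ 2)

namespace PCP
variable {n r : ℕ}

variable {n r : ℕ}

/-- Euclidean norm of a vector. -/
noncomputable def vnorm {n : ℕ} (v : Fin n → ℝ) : ℝ := Real.sqrt (v ⬝ᵥ v)

lemma dotProduct_self_nonneg' (v : Fin n → ℝ) : 0 ≤ v ⬝ᵥ v :=
  Finset.sum_nonneg fun i _ => mul_self_nonneg _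

lemma vnorm_nonneg (v : Fin n → ℝ) : 0 ≤ vnorm v := Real.sqrt_nonneg _

lemma vnorm_sq (v : Fin n → ℝ) : vnorm v ^ 2 = v ⬝ᵥ v := by
  rw [vnorm, Real.sq_sqrt (dotProduct_self_nonneg' v)]

lemma vnorm_eq_zero {v : Fin n → ℝ} (h : vnorm v = 0) : v = 0 := by
  have h2 : v ⬝ᵥ v = 0 := by rw [← vnorm_sq, h]; ring
  funext i
  have := (Finset.sum_eq_zero_iff_of_nonneg (fun i _ => mul_self_nonneg (v i))).1 h2 i
    (Finset.mem_univ i)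
  simpa [mul_self_eq_zero] using this

/-- Cauchy-Schwarz for dot products. -/
lemma dotProduct_le_vnorm (v w : Fin n → ℝ) : v ⬝ᵥ w ≤ vnorm v * vnorm w := by
  have h := Finset.sum_mul_sq_le_sq_mul_sq Finset.univ v w
  have h2 : vnorm v * vnorm w = Real.sqrt ((∑ i, v i ^ 2) * (∑ i, w i ^ 2)) := by
    rw [vnorm, vnorm, ← Real.sqrt_mul (dotProduct_self_nonneg' v)]
    congr 2 <;> simp [dotProduct, sq]
  rw [h2]
  calc v ⬝ᵥ w ≤ |v ⬝ᵥ w| := le_abs_self _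
    _ ≤ Real.sqrt ((∑ i, v i ^ 2) * (∑ i, w i ^ 2)) := by
        rw [← Real.sqrt_sq_eq_abs]
        exact Real.sqrt_le_sqrt (by simpa [dotProduct] using h)


lemma frobInner_eq_sum (A B : Matrix (Fin n) (Fin n) ℝ) :
    frobInner A B = ∑ i, ∑ j, A i j * B i j := by
  rw [frobInner, Matrix.trace, Finset.sum_comm]
  simp [Matrix.diag, Matrix.mul_apply, Matrix.transpose_apply]

lemma frobInner_comm (A B : Matrix (Fin n) (Fin n) ℝ) : frobInner A B = frobInner B A := by
  simp [frobInner_eq_sum, mul_comm]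

lemma frobInner_add_right (A B C : Matrix (Fin n) (Fin n) ℝ) :
    frobInner A (B + C) = frobInner A B + frobInner A C := by
  simp [frobInner_eq_sum, Matrix.add_apply, mul_add, Finset.sum_add_distrib]

lemma frobInner_add_left (A B C : Matrix (Fin n) (Fin n) ℝ) :
    frobInner (A + B) C = frobInner A C + frobInner B C := by
  rw [frobInner_comm, frobInner_add_right, frobInner_comm C A, frobInner_comm C B]

lemma frobInner_sub_right (A B C : Matrix (Fin n) (Fin n) ℝ) :
    frobInner A (B - C) = frobInner A B - frobInner A C := by
  simp [frobInner_eq_sum, Matrix.sub_apply, mul_sub, Finset.sum_sub_distrib]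

lemma frobInner_smul_left (c : ℝ) (A B : Matrix (Fin n) (Fin n) ℝ) :
    frobInner (c • A) B = c * frobInner A B := by
  simp [frobInner_eq_sum, Matrix.smul_apply, Finset.mul_sum, smul_eq_mul, mul_assoc]

lemma frobInner_zero_left (B : Matrix (Fin n) (Fin n) ℝ) : frobInner 0 B = 0 := by
  simp [frobInner_eq_sum]

lemma frobNorm_nonneg (A : Matrix (Fin n) (Fin n) ℝ) : 0 ≤ frobNorm A := Real.sqrt_nonneg _

lemma frobNorm_sq (A : Matrix (Fin n) (Fin n) ℝ) : frobNorm A ^ 2 = frobInner A A := by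
  rw [frobNorm, Real.sq_sqrt (Finset.sum_nonneg fun i _ => Finset.sum_nonneg fun j _ => sq_nonneg (A i j))]
  simp [frobInner_eq_sum, sq]

lemma frobNorm_eq_zero {A : Matrix (Fin n) (Fin n) ℝ} (h : frobNorm A = 0) : A = 0 := by
  have h2 : ∑ i, ∑ j, (A i j)^2 = 0 := by
    have hnn : (0:ℝ) ≤ ∑ i, ∑ j, (A i j)^2 :=
      Finset.sum_nonneg fun i _ => Finset.sum_nonneg fun j _ => sq_nonneg _
    have := congrArg (·^2) h
    simp only [frobNorm, Real.sq_sqrt hnn] at this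
    simpa using this
  ext i j
  have hi := (Finset.sum_eq_zero_iff_of_nonneg (fun i _ => Finset.sum_nonneg fun j _ => sq_nonneg (A i j))).1 h2 i (Finset.mem_univ i)
  have hj := (Finset.sum_eq_zero_iff_of_nonneg (fun j _ => sq_nonneg (A i j))).1 hi j (Finset.mem_univ j)
  simpa [pow_eq_zero_iff] using hj

/-- Cauchy–Schwarz for the Frobenius inner product. -/
lemma frobInner_le (A B : Matrix (Fin n) (Fin n) ℝ) :
    frobInner A B ≤ frobNorm A * frobNorm B := by
  have key : ∀ C : Matrix (Fin n) (Fin n) ℝ,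
      ∑ i, ∑ j, (C i j)^2 = ∑ p : Fin n × Fin n, (C p.1 p.2)^2 := by
    intro C; rw [← Finset.sum_product']; rfl
  have h := Finset.sum_mul_sq_le_sq_mul_sq Finset.univ
    (fun p : Fin n × Fin n => A p.1 p.2) (fun p : Fin n × Fin n => B p.1 p.2)
  have hAB : frobInner A B = ∑ p : Fin n × Fin n, A p.1 p.2 * B p.1 p.2 := by
    rw [frobInner_eq_sum, ← Finset.sum_product']; rfl
  rw [hAB, frobNorm, frobNorm, key, key, ← Real.sqrt_mul (Finset.sum_nonneg fun p _ => sq_nonneg _)]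
  calc (∑ p : Fin n × Fin n, A p.1 p.2 * B p.1 p.2)
      ≤ |∑ p : Fin n × Fin n, A p.1 p.2 * B p.1 p.2| := le_abs_self _
    _ ≤ _ := by rw [← Real.sqrt_sq_eq_abs]; exact Real.sqrt_le_sqrt h

lemma neg_frobInner_le (A B : Matrix (Fin n) (Fin n) ℝ) :
    -frobInner A B ≤ frobNorm A * frobNorm B := by
  have := frobInner_le A (-B)
  have h2 : frobInner A (-B) = -frobInner A B := by
    simp [frobInner_eq_sum, Finset.sum_neg_distrib]
  have h3 : frobNorm (-B) = frobNorm B := by simp [frobNorm]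
  rw [h2, h3] at this; exact this

lemma frobNorm_triangle (A B : Matrix (Fin n) (Fin n) ℝ) :
    frobNorm (A + B) ≤ frobNorm A + frobNorm B := by
  have h1 : frobNorm (A+B)^2 ≤ (frobNorm A + frobNorm B)^2 := by
    rw [frobNorm_sq, frobInner_add_left, frobInner_add_right, frobInner_add_right]
    have := frobInner_le A B
    have h2 := frobInner_comm B A
    nlinarith [frobNorm_sq A, frobNorm_sq B, frobNorm_nonneg A, frobNorm_nonneg B]
  nlinarith [frobNorm_nonneg (A+B), frobNorm_nonneg A, frobNorm_nonneg B]

lemma l1Norm_nonneg (A : Matrix (Fin n) (Fin n) ℝ) : 0 ≤ l1Norm A :=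
  Finset.sum_nonneg fun i _ => Finset.sum_nonneg fun j _ => abs_nonneg _

lemma frobNorm_le_l1Norm (A : Matrix (Fin n) (Fin n) ℝ) : frobNorm A ≤ l1Norm A := by
  rw [frobNorm]
  have h : ∑ i, ∑ j, (A i j)^2 ≤ (l1Norm A)^2 := by
    have key : ∀ i j, (i, j) ∈ (Finset.univ : Finset (Fin n × Fin n)) := by simp
    have h1 : ∑ i, ∑ j, (A i j)^2 = ∑ p : Fin n × Fin n, |A p.1 p.2|^2 := by
      rw [← Finset.sum_product']
      simp only [sq_abs]
      rfl
    have h2 : l1Norm A = ∑ p : Fin n × Fin n, |A p.1 p.2| := by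
      rw [l1Norm, ← Finset.sum_product']; rfl
    rw [h1, h2]
    exact Finset.sum_sq_le_sq_sum_of_nonneg fun p _ => abs_nonneg _
  calc Real.sqrt (∑ i, ∑ j, (A i j)^2) ≤ Real.sqrt ((l1Norm A)^2) := Real.sqrt_le_sqrt h
    _ = l1Norm A := Real.sqrt_sq (l1Norm_nonneg A)


lemma vnorm_eq_norm (x : Fin n → ℝ) :
    vnorm x = ‖(WithLp.equiv 2 (Fin n → ℝ)).symm x‖ := by
  rw [EuclideanSpace.norm_eq, vnorm]
  congr 1
  simp [dotProduct, Real.norm_eq_abs, sq_abs, sq]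

lemma vnorm_mulVec_le (A : Matrix (Fin n) (Fin n) ℝ) (x : Fin n → ℝ) :
    vnorm (A *ᵥ x) ≤ matSpectralNorm A * vnorm x := by
  have h := (Matrix.toEuclideanCLM (𝕜 := ℝ) A).le_opNorm ((WithLp.equiv 2 (Fin n → ℝ)).symm x)
  rw [WithLp.equiv_symm_apply, Matrix.toEuclideanCLM_toLp] at h
  rw [vnorm_eq_norm, vnorm_eq_norm]
  rw [WithLp.equiv_symm_apply]
  exact h

lemma spectralNorm_nonneg (A : Matrix (Fin n) (Fin n) ℝ) : 0 ≤ matSpectralNorm A := norm_nonneg _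

lemma spectralNorm_le_of_bound {A : Matrix (Fin n) (Fin n) ℝ} {c : ℝ} (hc : 0 ≤ c)
    (h : ∀ x : Fin n → ℝ, vnorm (A *ᵥ x) ≤ c * vnorm x) : matSpectralNorm A ≤ c := by
  apply ContinuousLinearMap.opNorm_le_bound _ hc
  intro y
  have h2 := h (WithLp.equiv 2 (Fin n → ℝ) y)
  rw [vnorm_eq_norm, vnorm_eq_norm] at h2
  have h3 : (WithLp.equiv 2 (Fin n → ℝ)).symm (WithLp.equiv 2 (Fin n → ℝ) y) = y := by simp
  rw [h3] at h2
  calc ‖Matrix.toEuclideanCLM (𝕜 := ℝ) A y‖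
      = ‖(WithLp.equiv 2 (Fin n → ℝ)).symm (A *ᵥ (WithLp.equiv 2 (Fin n → ℝ) y))‖ := by
        rfl
    _ ≤ c * ‖y‖ := h2


noncomputable def evals (A : Matrix (Fin n) (Fin n) ℝ) : Fin n → ℝ :=
  (Matrix.isHermitian_conjTranspose_mul_self A).eigenvalues

noncomputable def qmat (A : Matrix (Fin n) (Fin n) ℝ) : Matrix (Fin n) (Fin n) ℝ :=
  ((Matrix.isHermitian_conjTranspose_mul_self A).eigenvectorUnitary : Matrix (Fin n) (Fin n) ℝ)

noncomputable def qcol (A : Matrix (Fin n) (Fin n) ℝ) (i : Fin n) : Fin n → ℝ :=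
  fun k => qmat A k i

lemma nuclearNorm_eq (A : Matrix (Fin n) (Fin n) ℝ) :
    nuclearNorm A = ∑ i, Real.sqrt (evals A i) := rfl

lemma star_eq_transpose (M : Matrix (Fin n) (Fin n) ℝ) : star M = Mᵀ := by
  ext i j; simp [Matrix.star_apply]

lemma qmat_orth (A : Matrix (Fin n) (Fin n) ℝ) : (qmat A)ᵀ * qmat A = 1 := by
  have h := ((Matrix.isHermitian_conjTranspose_mul_self A).eigenvectorUnitary).2
  rw [Matrix.mem_unitaryGroup_iff'] at h
  rw [← star_eq_transpose]
  exact h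

lemma qmat_orth' (A : Matrix (Fin n) (Fin n) ℝ) : qmat A * (qmat A)ᵀ = 1 :=
  mul_eq_one_comm.mp (qmat_orth A)

lemma evals_nonneg (A : Matrix (Fin n) (Fin n) ℝ) (i : Fin n) : 0 ≤ evals A i := by
  have h := (Matrix.posSemidef_conjTranspose_mul_self A).eigenvalues_nonneg i
  have he : Aᴴ = Aᵀ := by ext i j; simp [Matrix.conjTranspose_apply]
  unfold evals
  convert h using 2 <;> rw [he]

lemma mulVec_qcol (A : Matrix (Fin n) (Fin n) ℝ) (i : Fin n) :
    (Aᵀ * A) *ᵥ qcol A i = evals A i • qcol A i := by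
  have h := (Matrix.isHermitian_conjTranspose_mul_self A).mulVec_eigenvectorBasis i
  have hq : qcol A i = ⇑((Matrix.isHermitian_conjTranspose_mul_self A).eigenvectorBasis i) := by
    funext k
    exact (Matrix.isHermitian_conjTranspose_mul_self A).eigenvectorUnitary_apply k i
  rw [hq]; exact h

lemma qcol_dot (A : Matrix (Fin n) (Fin n) ℝ) (i j : Fin n) :
    qcol A i ⬝ᵥ qcol A j = if i = j then 1 else 0 := by
  have h := congrFun (congrFun (qmat_orth A) i) j
  simp only [Matrix.mul_apply, Matrix.transpose_apply, Matrix.one_apply] at h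
  simpa [dotProduct, qcol] using h

lemma qcol_complete (A : Matrix (Fin n) (Fin n) ℝ) (k l : Fin n) :
    ∑ i, qcol A i k * qcol A i l = if k = l then 1 else 0 := by
  have h := congrFun (congrFun (qmat_orth' A) k) l
  simp only [Matrix.mul_apply, Matrix.transpose_apply, Matrix.one_apply] at h
  simpa [qcol] using h

lemma trace_eq_sum_q (A : Matrix (Fin n) (Fin n) ℝ) (M : Matrix (Fin n) (Fin n) ℝ) :
    Matrix.trace M = ∑ i, qcol A i ⬝ᵥ (M *ᵥ qcol A i) := by
  have : ∀ i, qcol A i ⬝ᵥ (M *ᵥ qcol A i)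
      = ∑ k, ∑ l, M k l * (qcol A i k * qcol A i l) := by
    intro i
    simp only [dotProduct, Matrix.mulVec, dotProduct, Finset.mul_sum]
    congr 1; funext k
    congr 1; funext l
    ring
  simp only [this]
  rw [Finset.sum_comm]
  have : ∀ k, ∑ i, ∑ l, M k l * (qcol A i k * qcol A i l)
      = ∑ l, M k l * ∑ i, qcol A i k * qcol A i l := by
    intro k
    rw [Finset.sum_comm]
    congr 1; funext l
    rw [Finset.mul_sum]
  simp only [this, qcol_complete]
  simp [Matrix.trace, Matrix.diag]

lemma vnorm_A_qcol (A : Matrix (Fin n) (Fin n) ℝ) (i : Fin n) :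
    (A *ᵥ qcol A i) ⬝ᵥ (A *ᵥ qcol A i) = evals A i := by
  have h1 : (A *ᵥ qcol A i) ⬝ᵥ (A *ᵥ qcol A i) = qcol A i ⬝ᵥ ((Aᵀ * A) *ᵥ qcol A i) := by
    rw [← Matrix.mulVec_mulVec, Matrix.dotProduct_mulVec (qcol A i) Aᵀ,
      Matrix.vecMul_transpose]
  rw [h1, mulVec_qcol]
  simp [dotProduct_smul, qcol_dot]


lemma nuclearNorm_nonneg (A : Matrix (Fin n) (Fin n) ℝ) : 0 ≤ nuclearNorm A :=
  Finset.sum_nonneg fun i _ => Real.sqrt_nonneg _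

lemma vnorm_qcol (A : Matrix (Fin n) (Fin n) ℝ) (i : Fin n) : vnorm (qcol A i) = 1 := by
  rw [vnorm, qcol_dot]; simp

/-- N1 : trace duality bound. -/
lemma frobInner_le_spec_mul_nuclear (Q A : Matrix (Fin n) (Fin n) ℝ) :
    frobInner Q A ≤ matSpectralNorm Q * nuclearNorm A := by
  have key : frobInner Q A = ∑ i, (Q *ᵥ qcol A i) ⬝ᵥ (A *ᵥ qcol A i) := by
    rw [frobInner, trace_eq_sum_q A (Qᵀ * A)]
    congr 1; funext i
    rw [← Matrix.mulVec_mulVec, Matrix.dotProduct_mulVec (qcol A i) Qᵀ, Matrix.vecMul_transpose]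
  rw [key, nuclearNorm_eq, Finset.mul_sum]
  apply Finset.sum_le_sum
  intro i _
  have h1 := dotProduct_le_vnorm (Q *ᵥ qcol A i) (A *ᵥ qcol A i)
  have h2 : vnorm (A *ᵥ qcol A i) = Real.sqrt (evals A i) := by rw [vnorm, vnorm_A_qcol]
  have h3 := vnorm_mulVec_le Q (qcol A i)
  rw [vnorm_qcol, mul_one] at h3
  have h5 : 0 ≤ Real.sqrt (evals A i) := Real.sqrt_nonneg _
  have h6 : 0 ≤ vnorm (A *ᵥ qcol A i) := vnorm_nonneg _
  nlinarith [vnorm_nonneg (Q *ᵥ qcol A i)]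

noncomputable def coef (A : Matrix (Fin n) (Fin n) ℝ) (i : Fin n) : ℝ :=
  if 0 < evals A i then (Real.sqrt (evals A i))⁻¹ else 0

noncomputable def cmat (A : Matrix (Fin n) (Fin n) ℝ) : Matrix (Fin n) (Fin n) ℝ :=
  ∑ i, coef A i • Matrix.vecMulVec (qcol A i) (qcol A i)

noncomputable def dualMat (A : Matrix (Fin n) (Fin n) ℝ) : Matrix (Fin n) (Fin n) ℝ :=
  A * cmat A

lemma cmat_apply (A : Matrix (Fin n) (Fin n) ℝ) (k l : Fin n) :
    cmat A k l = ∑ i, coef A i * (qcol A i k * qcol A i l) := by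
  simp [cmat, Matrix.sum_apply, Matrix.vecMulVec_apply]

lemma cmat_transpose (A : Matrix (Fin n) (Fin n) ℝ) : (cmat A)ᵀ = cmat A := by
  ext k l
  simp only [Matrix.transpose_apply, cmat_apply]
  congr 1; funext i; ring

lemma sum_dotProduct' (f : Fin n → (Fin n → ℝ)) (v : Fin n → ℝ) :
    (∑ i, f i) ⬝ᵥ v = ∑ i, f i ⬝ᵥ v := by
  simp only [dotProduct, Finset.sum_apply, Finset.sum_mul]
  exact Finset.sum_comm

lemma dotProduct_sum' (f : Fin n → (Fin n → ℝ)) (v : Fin n → ℝ) :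
    v ⬝ᵥ (∑ i, f i) = ∑ i, v ⬝ᵥ f i := by
  simp only [dotProduct, Finset.sum_apply, Finset.mul_sum]
  exact Finset.sum_comm

lemma mulVec_sum' (A : Matrix (Fin n) (Fin n) ℝ) (f : Fin n → (Fin n → ℝ)) :
    A *ᵥ (∑ i, f i) = ∑ i, A *ᵥ f i := by
  funext k
  simp only [Matrix.mulVec, dotProduct, Finset.sum_apply, Finset.mul_sum]
  rw [Finset.sum_comm]

lemma mulVec_dot (M : Matrix (Fin n) (Fin n) ℝ) (x y : Fin n → ℝ) :
    (M *ᵥ x) ⬝ᵥ y = x ⬝ᵥ (Mᵀ *ᵥ y) := by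
  rw [Matrix.dotProduct_mulVec x Mᵀ y, Matrix.vecMul_transpose]

lemma smul_vec_dot (c : ℝ) (v w : Fin n → ℝ) : (c • v) ⬝ᵥ w = c * (v ⬝ᵥ w) :=
  smul_dotProduct c v w

lemma cmat_mulVec (A : Matrix (Fin n) (Fin n) ℝ) (x : Fin n → ℝ) :
    cmat A *ᵥ x = ∑ i, (coef A i * (qcol A i ⬝ᵥ x)) • qcol A i := by
  funext k
  simp only [Matrix.mulVec, dotProduct, cmat_apply, Finset.sum_apply, Pi.smul_apply,
    smul_eq_mul, Finset.sum_mul]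
  rw [Finset.sum_comm]
  congr 1; funext i
  rw [Finset.mul_sum, Finset.sum_mul]
  congr 1; funext l
  ring

lemma cmat_mulVec_qcol (A : Matrix (Fin n) (Fin n) ℝ) (j : Fin n) :
    cmat A *ᵥ qcol A j = coef A j • qcol A j := by
  rw [cmat_mulVec]
  rw [Finset.sum_eq_single j]
  · rw [qcol_dot]; simp
  · intro i _ hij
    rw [qcol_dot]
    simp [hij]
  · simp

lemma evals_mul_coef (A : Matrix (Fin n) (Fin n) ℝ) (i : Fin n) :
    evals A i * coef A i = Real.sqrt (evals A i) := by
  rw [coef]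
  by_cases h : 0 < evals A i
  · rw [if_pos h]
    have hs : 0 < Real.sqrt (evals A i) := Real.sqrt_pos.mpr h
    rw [mul_inv_eq_iff_eq_mul₀ (ne_of_gt hs), Real.mul_self_sqrt (le_of_lt h)]
  · rw [if_neg h]
    have h0 : evals A i = 0 := le_antisymm (not_lt.mp h) (evals_nonneg A i)
    rw [h0]; simp

/-- N2a : the dual matrix attains the nuclear norm. -/
lemma frobInner_dualMat (A : Matrix (Fin n) (Fin n) ℝ) :
    frobInner (dualMat A) A = nuclearNorm A := by
  rw [frobInner, dualMat, Matrix.transpose_mul, cmat_transpose, Matrix.mul_assoc,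
    trace_eq_sum_q A (cmat A * (Aᵀ * A)), nuclearNorm_eq]
  congr 1; funext i
  rw [← Matrix.mulVec_mulVec, mulVec_qcol, Matrix.mulVec_smul, cmat_mulVec_qcol]
  rw [dotProduct_smul, dotProduct_smul, qcol_dot]
  simp only [if_pos rfl, smul_eq_mul, mul_one]
  simp only [if_pos trivial, mul_one]
  exact evals_mul_coef A i



lemma parseval (A : Matrix (Fin n) (Fin n) ℝ) (x : Fin n → ℝ) :
    ∑ i, (qcol A i ⬝ᵥ x) ^ 2 = x ⬝ᵥ x := by
  have h := trace_eq_sum_q A (Matrix.vecMulVec x x)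
  have h1 : Matrix.trace (Matrix.vecMulVec x x) = x ⬝ᵥ x := by
    simp [Matrix.trace, Matrix.diag, Matrix.vecMulVec_apply, dotProduct]
  have h2 : ∀ i, qcol A i ⬝ᵥ (Matrix.vecMulVec x x *ᵥ qcol A i) = (qcol A i ⬝ᵥ x) ^ 2 := by
    intro i
    have hv : Matrix.vecMulVec x x *ᵥ qcol A i = (x ⬝ᵥ qcol A i) • x := by
      funext k
      simp only [Matrix.mulVec, dotProduct, Matrix.vecMulVec_apply, Pi.smul_apply, smul_eq_mul,
        Finset.sum_mul]
      exact Finset.sum_congr rfl fun l _ => by ring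
    rw [hv, dotProduct_smul]
    rw [dotProduct_comm x (qcol A i)]
    simp [sq, smul_eq_mul]
  rw [h1] at h
  rw [h]
  exact Finset.sum_congr rfl fun i _ => (h2 i).symm

/-- N2b : the dual matrix has spectral norm at most one. -/
lemma spec_dualMat_le_one (A : Matrix (Fin n) (Fin n) ℝ) : matSpectralNorm (dualMat A) ≤ 1 := by
  apply spectralNorm_le_of_bound zero_le_one
  intro x
  rw [one_mul]
  set a : Fin n → ℝ := fun i => coef A i * (qcol A i ⬝ᵥ x) with ha
  have hy : dualMat A *ᵥ x = A *ᵥ (cmat A *ᵥ x) := (Matrix.mulVec_mulVec x A (cmat A)).symm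
  have hsq : (dualMat A *ᵥ x) ⬝ᵥ (dualMat A *ᵥ x)
      = (cmat A *ᵥ x) ⬝ᵥ ((Aᵀ * A) *ᵥ (cmat A *ᵥ x)) := by
    rw [hy, ← Matrix.mulVec_mulVec, Matrix.dotProduct_mulVec (cmat A *ᵥ x) Aᵀ,
      Matrix.vecMul_transpose]
  have hGy : (Aᵀ * A) *ᵥ (cmat A *ᵥ x) = ∑ i, (a i * evals A i) • qcol A i := by
    rw [cmat_mulVec, mulVec_sum']
    congr 1; funext i
    rw [Matrix.mulVec_smul, mulVec_qcol, smul_smul]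
    try simp only [ha]
  have hval : (cmat A *ᵥ x) ⬝ᵥ ((Aᵀ * A) *ᵥ (cmat A *ᵥ x)) = ∑ i, (a i)^2 * evals A i := by
    rw [hGy, cmat_mulVec, sum_dotProduct']
    congr 1; funext i
    rw [dotProduct_sum']
    rw [Finset.sum_eq_single i]
    · rw [smul_vec_dot, dotProduct_smul, qcol_dot]
      simp only [if_pos rfl, if_true, smul_eq_mul, mul_one, ha, sq]
      try ring
    · intro j _ hji
      rw [smul_vec_dot, dotProduct_smul, qcol_dot]
      simp [Ne.symm hji]
    · simp
  have hterm : ∀ i, (a i)^2 * evals A i ≤ (qcol A i ⬝ᵥ x)^2 := by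
    intro i
    simp only [ha]
    rw [mul_pow, coef]
    by_cases h : 0 < evals A i
    · rw [if_pos h]
      have : (Real.sqrt (evals A i))⁻¹ ^ 2 * (qcol A i ⬝ᵥ x) ^ 2 * evals A i
          = (qcol A i ⬝ᵥ x) ^ 2 * ((Real.sqrt (evals A i))^2)⁻¹ * evals A i := by
        rw [← inv_pow]; ring
      rw [this, Real.sq_sqrt (le_of_lt h)]
      have hne : evals A i ≠ 0 := ne_of_gt h
      field_simp
      exact le_rfl
    · rw [if_neg h]
      have h0 : evals A i = 0 := le_antisymm (not_lt.mp h) (evals_nonneg A i)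
      rw [h0]
      simp [sq_nonneg]
  have hbound : (dualMat A *ᵥ x) ⬝ᵥ (dualMat A *ᵥ x) ≤ x ⬝ᵥ x := by
    rw [hsq, hval, ← parseval A x]
    exact Finset.sum_le_sum fun i _ => hterm i
  rw [vnorm, vnorm]
  exact Real.sqrt_le_sqrt hbound

lemma dualMat_left_zero {r : ℕ} (A : Matrix (Fin n) (Fin n) ℝ) (B : Matrix (Fin n) (Fin r) ℝ)
    (h : Bᵀ * A = 0) : Bᵀ * dualMat A = 0 := by
  rw [dualMat, ← Matrix.mul_assoc, h, Matrix.zero_mul]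

lemma col_mulVec {r : ℕ} (A : Matrix (Fin n) (Fin n) ℝ) (V : Matrix (Fin n) (Fin r) ℝ)
    (m : Fin r) : A *ᵥ (fun k => V k m) = fun k => (A * V) k m := by
  funext k
  simp [Matrix.mulVec, Matrix.mul_apply, dotProduct]

lemma dualMat_right_zero {r : ℕ} (A : Matrix (Fin n) (Fin n) ℝ) (V : Matrix (Fin n) (Fin r) ℝ)
    (h : A * V = 0) : dualMat A * V = 0 := by
  have hq : ∀ i (m : Fin r), 0 < evals A i → qcol A i ⬝ᵥ (fun k => V k m) = 0 := by
    intro i m hi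
    have h1 : (Aᵀ * A) *ᵥ (fun k => V k m) = 0 := by
      rw [← Matrix.mulVec_mulVec, col_mulVec A V m, h]
      funext k
      simp [Matrix.mulVec, dotProduct, Matrix.zero_apply]
    have h2 : evals A i * (qcol A i ⬝ᵥ (fun k => V k m)) = 0 := by
      have h3 : (evals A i • qcol A i) ⬝ᵥ (fun k => V k m) = 0 := by
        rw [← mulVec_qcol, mulVec_dot]
        have hsymm : (Aᵀ * A)ᵀ = Aᵀ * A := by
          rw [Matrix.transpose_mul, Matrix.transpose_transpose]
        rw [hsymm, h1, dotProduct_zero]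
      rw [← h3, smul_vec_dot]
    exact (mul_eq_zero.mp h2).resolve_left (ne_of_gt hi)
  have hc : cmat A * V = 0 := by
    ext k m
    simp only [Matrix.mul_apply, cmat_apply, Matrix.zero_apply, Finset.sum_mul]
    rw [Finset.sum_comm]
    apply Finset.sum_eq_zero
    intro i _
    by_cases hi : 0 < evals A i
    · have := hq i m hi
      simp only [dotProduct] at this
      calc ∑ j, coef A i * (qcol A i k * qcol A i j) * V j m
          = coef A i * qcol A i k * ∑ j, qcol A i j * V j m := by
            rw [Finset.mul_sum]; congr 1; funext j; ring
        _ = 0 := by rw [this, mul_zero]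
    · have : coef A i = 0 := by rw [coef, if_neg hi]
      apply Finset.sum_eq_zero
      intro j _
      rw [this]; ring
  rw [dualMat, Matrix.mul_assoc, hc, Matrix.mul_zero]

lemma spectralNorm_le_frobNorm (A : Matrix (Fin n) (Fin n) ℝ) :
    matSpectralNorm A ≤ frobNorm A := by
  apply spectralNorm_le_of_bound (frobNorm_nonneg A)
  intro x
  have h : (A *ᵥ x) ⬝ᵥ (A *ᵥ x) ≤ (∑ i, ∑ j, (A i j)^2) * (x ⬝ᵥ x) := by
    have hx : x ⬝ᵥ x = ∑ j, (x j)^2 := by simp [dotProduct, sq]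
    have expand : (A *ᵥ x) ⬝ᵥ (A *ᵥ x) = ∑ k, (∑ j, A k j * x j)^2 := by
      simp [dotProduct, Matrix.mulVec, sq]
    rw [expand, hx, Finset.sum_mul]
    apply Finset.sum_le_sum
    intro k _
    exact Finset.sum_mul_sq_le_sq_mul_sq Finset.univ (fun j => A k j) x
  rw [vnorm, vnorm, frobNorm]
  calc Real.sqrt ((A *ᵥ x) ⬝ᵥ (A *ᵥ x)) ≤ Real.sqrt ((∑ i, ∑ j, (A i j)^2) * (x ⬝ᵥ x)) :=
        Real.sqrt_le_sqrt h
    _ = _ := Real.sqrt_mul (Finset.sum_nonneg fun i _ => Finset.sum_nonneg fun j _ => sq_nonneg _) _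

lemma frobNorm_le_nuclearNorm (A : Matrix (Fin n) (Fin n) ℝ) :
    frobNorm A ≤ nuclearNorm A := by
  by_cases h : frobNorm A = 0
  · rw [h]; exact nuclearNorm_nonneg A
  · have hpos : 0 < frobNorm A := lt_of_le_of_ne (frobNorm_nonneg A) (Ne.symm h)
    have h1 : frobNorm A ^ 2 ≤ frobNorm A * nuclearNorm A := by
      rw [frobNorm_sq]
      calc frobInner A A ≤ matSpectralNorm A * nuclearNorm A := frobInner_le_spec_mul_nuclear A A
        _ ≤ frobNorm A * nuclearNorm A :=
            mul_le_mul_of_nonneg_right (spectralNorm_le_frobNorm A) (nuclearNorm_nonneg A)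
    nlinarith



lemma mulVec_dot' {m k : ℕ} (M : Matrix (Fin m) (Fin k) ℝ) (x : Fin k → ℝ) (y : Fin m → ℝ) :
    (M *ᵥ x) ⬝ᵥ y = x ⬝ᵥ (Mᵀ *ᵥ y) := by
  rw [Matrix.dotProduct_mulVec x Mᵀ y, Matrix.vecMul_transpose]

lemma mulVec_sub' {m k : ℕ} (M : Matrix (Fin m) (Fin k) ℝ) (x y : Fin k → ℝ) :
    M *ᵥ (x - y) = M *ᵥ x - M *ᵥ y := by
  funext i
  simp [Matrix.mulVec, dotProduct, mul_sub, Finset.sum_sub_distrib]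

section ProjT

variable {U V : Matrix (Fin n) (Fin r) ℝ}

lemma projT_left (hU : Uᵀ * U = 1) (M : Matrix (Fin n) (Fin n) ℝ) :
    Uᵀ * (M - projT U V M) = 0 := by
  simp only [projT, Matrix.mul_sub, Matrix.mul_add, ← Matrix.mul_assoc, hU, Matrix.one_mul]
  abel

lemma projT_right (hV : Vᵀ * V = 1) (M : Matrix (Fin n) (Fin n) ℝ) :
    (M - projT U V M) * V = 0 := by
  simp only [projT, Matrix.sub_mul, Matrix.add_mul, Matrix.mul_assoc]
  have h1 : V * (Vᵀ * V) = V := by rw [hV, Matrix.mul_one]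
  simp only [h1]
  abel

lemma frobInner_mul_left_zero {Q : Matrix (Fin n) (Fin n) ℝ}
    (hQ : Uᵀ * Q = 0) (X : Matrix (Fin r) (Fin n) ℝ) : frobInner Q (U * X) = 0 := by
  have h : Qᵀ * U = 0 := by
    have := congrArg Matrix.transpose hQ
    rwa [Matrix.transpose_mul, Matrix.transpose_transpose, Matrix.transpose_zero] at this
  rw [frobInner, ← Matrix.mul_assoc, h, Matrix.zero_mul, Matrix.trace_zero]

lemma frobInner_projT_zero {Q : Matrix (Fin n) (Fin n) ℝ}
    (hQU : Uᵀ * Q = 0) (hQV : Q * V = 0) (M : Matrix (Fin n) (Fin n) ℝ) :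
    frobInner Q (projT U V M) = 0 := by
  have hQt : Qᵀ * U = 0 := by
    have := congrArg Matrix.transpose hQU
    rwa [Matrix.transpose_mul, Matrix.transpose_transpose, Matrix.transpose_zero] at this
  have hVt : Vᵀ * Qᵀ = 0 := by
    have := congrArg Matrix.transpose hQV
    rwa [Matrix.transpose_mul, Matrix.transpose_zero] at this
  have t1 : frobInner Q (U * Uᵀ * M) = 0 := by
    rw [Matrix.mul_assoc]; exact frobInner_mul_left_zero hQU _
  have t3 : frobInner Q (U * Uᵀ * M * (V * Vᵀ)) = 0 := by
    rw [Matrix.mul_assoc, Matrix.mul_assoc, ← Matrix.mul_assoc Uᵀ M _]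
    exact frobInner_mul_left_zero hQU _
  have t2 : frobInner Q (M * (V * Vᵀ)) = 0 := by
    rw [frobInner, Matrix.trace_mul_comm, Matrix.mul_assoc M (V * Vᵀ) Qᵀ,
      Matrix.mul_assoc V Vᵀ Qᵀ, hVt, Matrix.mul_zero, Matrix.mul_zero, Matrix.trace_zero]
  rw [projT] at *
  rw [frobInner_sub_right, frobInner_add_right, t1, t2, t3]
  ring

lemma vnorm_col_one {M : Matrix (Fin n) (Fin r) ℝ} (hM : Mᵀ * M = 1) (i : Fin r) :
    vnorm (fun k => M k i) = 1 := by
  have h : (fun k => M k i) ⬝ᵥ (fun k => M k i) = 1 := by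
    have := congrFun (congrFun hM i) i
    simp only [Matrix.mul_apply, Matrix.transpose_apply, Matrix.one_apply_eq] at this
    simpa [dotProduct] using this
  rw [vnorm, h, Real.sqrt_one]

lemma spectralNorm_zero : matSpectralNorm (0 : Matrix (Fin n) (Fin n) ℝ) = 0 := by
  rw [matSpectralNorm, map_zero, norm_zero]

/-- spectral norm of `U * Vᵀ + Q` is at most one when `Q ⊥ T`. -/
lemma spec_UVt_add_le_one (hU : Uᵀ * U = 1) (hV : Vᵀ * V = 1)
    {Q : Matrix (Fin n) (Fin n) ℝ} (hQU : Uᵀ * Q = 0) (hQV : Q * V = 0)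
    (hQn : matSpectralNorm Q ≤ 1) : matSpectralNorm (U * Vᵀ + Q) ≤ 1 := by
  apply spectralNorm_le_of_bound zero_le_one
  intro x
  rw [one_mul]
  set a : Fin r → ℝ := Vᵀ *ᵥ x with ha
  have hrw : (U * Vᵀ + Q) *ᵥ x = U *ᵥ a + Q *ᵥ x := by
    rw [Matrix.add_mulVec, ← Matrix.mulVec_mulVec]
  have cross : (U *ᵥ a) ⬝ᵥ (Q *ᵥ x) = 0 := by
    rw [mulVec_dot', Matrix.mulVec_mulVec, hQU, Matrix.zero_mulVec, dotProduct_zero]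
  have uu : (U *ᵥ a) ⬝ᵥ (U *ᵥ a) = a ⬝ᵥ a := by
    rw [mulVec_dot', Matrix.mulVec_mulVec, hU, Matrix.one_mulVec]
  have hQx : Q *ᵥ x = Q *ᵥ (x - V *ᵥ a) := by
    rw [mulVec_sub', Matrix.mulVec_mulVec, hQV, Matrix.zero_mulVec, sub_zero]
  have qx : vnorm (Q *ᵥ x) ≤ vnorm (x - V *ᵥ a) := by
    rw [hQx]
    calc vnorm (Q *ᵥ (x - V *ᵥ a)) ≤ matSpectralNorm Q * vnorm (x - V *ᵥ a) := vnorm_mulVec_le _ _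
      _ ≤ 1 * vnorm (x - V *ᵥ a) := mul_le_mul_of_nonneg_right hQn (vnorm_nonneg _)
      _ = vnorm (x - V *ᵥ a) := one_mul _
  have hVa : (V *ᵥ a) ⬝ᵥ x = a ⬝ᵥ a := by
    rw [mulVec_dot']
  have hVa2 : (V *ᵥ a) ⬝ᵥ (V *ᵥ a) = a ⬝ᵥ a := by
    rw [mulVec_dot', Matrix.mulVec_mulVec, hV, Matrix.one_mulVec]
  have xa : (x - V *ᵥ a) ⬝ᵥ (x - V *ᵥ a) = x ⬝ᵥ x - a ⬝ᵥ a := by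
    rw [sub_dotProduct, dotProduct_sub, dotProduct_sub]
    rw [dotProduct_comm x (V *ᵥ a), hVa, hVa2]
    ring
  have expand : ((U * Vᵀ + Q) *ᵥ x) ⬝ᵥ ((U * Vᵀ + Q) *ᵥ x)
      = a ⬝ᵥ a + 2 * ((U *ᵥ a) ⬝ᵥ (Q *ᵥ x)) + (Q *ᵥ x) ⬝ᵥ (Q *ᵥ x) := by
    rw [hrw, add_dotProduct, dotProduct_add, dotProduct_add, uu,
      dotProduct_comm (Q *ᵥ x) (U *ᵥ a)]
    ring
  have hq2 : (Q *ᵥ x) ⬝ᵥ (Q *ᵥ x) ≤ x ⬝ᵥ x - a ⬝ᵥ a := by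
    have h1 : vnorm (Q *ᵥ x) ^ 2 ≤ vnorm (x - V *ᵥ a) ^ 2 :=
      pow_le_pow_left₀ (vnorm_nonneg _) qx 2
    rw [vnorm_sq, vnorm_sq, xa] at h1
    exact h1
  have final : ((U * Vᵀ + Q) *ᵥ x) ⬝ᵥ ((U * Vᵀ + Q) *ᵥ x) ≤ x ⬝ᵥ x := by
    rw [expand, cross]
    linarith
  rw [vnorm, vnorm]
  exact Real.sqrt_le_sqrt final

lemma frobInner_UVt (hU : Uᵀ * U = 1) (hV : Vᵀ * V = 1) (Sig : Matrix (Fin r) (Fin r) ℝ) :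
    frobInner (U * Vᵀ) (U * Sig * Vᵀ) = Matrix.trace Sig := by
  rw [frobInner, Matrix.transpose_mul, Matrix.transpose_transpose]
  have e1 : V * Uᵀ * (U * Sig * Vᵀ) = V * (Sig * Vᵀ) := by
    simp only [← Matrix.mul_assoc]
    rw [Matrix.mul_assoc V Uᵀ U, hU, Matrix.mul_one]
  rw [e1, Matrix.trace_mul_comm, Matrix.mul_assoc, hV, Matrix.mul_one]

/-- The nuclear norm of `U * Sig * Vᵀ` equals the trace of `Sig`. -/
lemma nuclearNorm_USVt (hU : Uᵀ * U = 1) (hV : Vᵀ * V = 1)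
    (Sig : Matrix (Fin r) (Fin r) ℝ)
    (hSigdiag : ∀ i j, i ≠ j → Sig i j = 0) (hSignn : ∀ i, 0 ≤ Sig i i) :
    nuclearNorm (U * Sig * Vᵀ) = Matrix.trace Sig := by
  have hspec : matSpectralNorm (U * Vᵀ) ≤ 1 := by
    have h := spec_UVt_add_le_one hU hV (Q := 0) (by rw [Matrix.mul_zero])
      (by rw [Matrix.zero_mul]) (by rw [spectralNorm_zero]; exact zero_le_one)
    rwa [add_zero] at h
  have huv : frobInner (U * Vᵀ) (U * Sig * Vᵀ) = Matrix.trace Sig := frobInner_UVt hU hV Sig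
  apply le_antisymm
  · rw [← frobInner_dualMat (U * Sig * Vᵀ)]
    have hentry : frobInner (dualMat (U * Sig * Vᵀ)) (U * Sig * Vᵀ)
        = ∑ i, (Vᵀ * ((dualMat (U * Sig * Vᵀ))ᵀ * U)) i i * Sig i i := by
      rw [frobInner]
      have e2 : (dualMat (U * Sig * Vᵀ))ᵀ * (U * Sig * Vᵀ)
          = ((dualMat (U * Sig * Vᵀ))ᵀ * U * Sig) * Vᵀ := by
        simp only [← Matrix.mul_assoc]
      rw [e2, Matrix.trace_mul_comm, Matrix.trace]
      apply Finset.sum_congr rfl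
      intro i _
      have e3 : Vᵀ * ((dualMat (U * Sig * Vᵀ))ᵀ * U * Sig)
          = (Vᵀ * ((dualMat (U * Sig * Vᵀ))ᵀ * U)) * Sig := by
        simp only [← Matrix.mul_assoc]
      rw [Matrix.diag_apply, e3, Matrix.mul_apply]
      rw [Finset.sum_eq_single i]
      · intro b _ hbi
        rw [hSigdiag b i hbi, mul_zero]
      · intro hni
        exact absurd (Finset.mem_univ i) hni
    rw [hentry, Matrix.trace]
    apply Finset.sum_le_sum
    intro i _
    have hd : (Vᵀ * ((dualMat (U * Sig * Vᵀ))ᵀ * U)) i i ≤ 1 := by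
      have e4 : (Vᵀ * ((dualMat (U * Sig * Vᵀ))ᵀ * U)) i i
          = (fun k => V k i) ⬝ᵥ ((dualMat (U * Sig * Vᵀ))ᵀ *ᵥ (fun k => U k i)) := by
        rw [col_mulVec]
        simp [Matrix.mul_apply, dotProduct]
      rw [e4, ← mulVec_dot']
      calc (dualMat (U * Sig * Vᵀ) *ᵥ fun k => V k i) ⬝ᵥ (fun k => U k i)
          ≤ vnorm (dualMat (U * Sig * Vᵀ) *ᵥ fun k => V k i) * vnorm (fun k => U k i) :=
            dotProduct_le_vnorm _ _
        _ ≤ (matSpectralNorm (dualMat (U * Sig * Vᵀ)) * vnorm (fun k => V k i))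
              * vnorm (fun k => U k i) :=
            mul_le_mul_of_nonneg_right (vnorm_mulVec_le _ _) (vnorm_nonneg _)
        _ = matSpectralNorm (dualMat (U * Sig * Vᵀ)) := by
            rw [vnorm_col_one hV, vnorm_col_one hU]; ring
        _ ≤ 1 := spec_dualMat_le_one _
    calc (Vᵀ * ((dualMat (U * Sig * Vᵀ))ᵀ * U)) i i * Sig i i
        ≤ 1 * Sig i i := mul_le_mul_of_nonneg_right hd (hSignn i)
      _ = Sig.diag i := one_mul _
  · calc Matrix.trace Sig = frobInner (U * Vᵀ) (U * Sig * Vᵀ) := huv.symm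
      _ ≤ matSpectralNorm (U * Vᵀ) * nuclearNorm (U * Sig * Vᵀ) :=
          frobInner_le_spec_mul_nuclear _ _
      _ ≤ 1 * nuclearNorm (U * Sig * Vᵀ) :=
          mul_le_mul_of_nonneg_right hspec (nuclearNorm_nonneg _)
      _ = nuclearNorm (U * Sig * Vᵀ) := one_mul _

end ProjT


section Omega

variable {Ω : Set (Fin n × Fin n)} [DecidablePred (· ∈ Ω)]

lemma projSupp_apply (M : Matrix (Fin n) (Fin n) ℝ) (i j : Fin n) :
    projSupp Ω M i j = if (i, j) ∈ Ω then M i j else 0 := rfl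

lemma frobNorm_projSupp_le (M : Matrix (Fin n) (Fin n) ℝ) :
    frobNorm (projSupp Ω M) ≤ frobNorm M := by
  apply Real.sqrt_le_sqrt
  apply Finset.sum_le_sum; intro i _
  apply Finset.sum_le_sum; intro j _
  rw [projSupp_apply]
  by_cases h : (i, j) ∈ Ω
  · rw [if_pos h]
  · rw [if_neg h]; simpa using sq_nonneg (M i j)

lemma projSupp_add (M N : Matrix (Fin n) (Fin n) ℝ) :
    projSupp Ω (M + N) = projSupp Ω M + projSupp Ω N := by
  ext i j
  simp only [projSupp_apply, Matrix.add_apply]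
  by_cases h : (i, j) ∈ Ω <;> simp [h]

/-- pointwise ℓ¹ subgradient inequality -/
lemma l1_subgradient {S₀ : Matrix (Fin n) (Fin n) ℝ}
    (hΩ : Ω = {p : Fin n × Fin n | S₀ p.1 p.2 ≠ 0}) (H : Matrix (Fin n) (Fin n) ℝ) :
    l1Norm S₀ - frobInner (signMatrix S₀) H + l1Norm (H - projSupp Ω H)
      ≤ l1Norm (S₀ - H) := by
  have key : ∀ i j, |S₀ i j| - Real.sign (S₀ i j) * H i j + |(H - projSupp Ω H) i j|
      ≤ |(S₀ - H) i j| := by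
    intro i j
    have hmem : ((i, j) ∈ Ω) ↔ S₀ i j ≠ 0 := by rw [hΩ]; rfl
    rw [Matrix.sub_apply, Matrix.sub_apply, projSupp_apply]
    by_cases h : (i, j) ∈ Ω
    · rw [if_pos h]
      simp only [sub_self, abs_zero, add_zero]
      rcases lt_trichotomy (S₀ i j) 0 with hlt | heq | hgt
      · rw [Real.sign_of_neg hlt, abs_of_neg hlt]
        have := neg_le_abs (S₀ i j - H i j)
        linarith [neg_le_abs (S₀ i j - H i j)]
      · exact absurd heq (hmem.mp h)
      · rw [Real.sign_of_pos hgt, abs_of_pos hgt]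
        linarith [le_abs_self (S₀ i j - H i j)]
    · rw [if_neg h]
      have h0 : S₀ i j = 0 := by
        by_contra hne
        exact h (hmem.mpr hne)
      rw [h0, sub_zero]
      simp [Real.sign_zero, abs_neg]
  calc l1Norm S₀ - frobInner (signMatrix S₀) H + l1Norm (H - projSupp Ω H)
      = ∑ i, ∑ j, (|S₀ i j| - Real.sign (S₀ i j) * H i j + |(H - projSupp Ω H) i j|) := by
        rw [l1Norm, l1Norm, frobInner_eq_sum]
        rw [← Finset.sum_sub_distrib, ← Finset.sum_add_distrib]
        apply Finset.sum_congr rfl; intro i _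
        rw [← Finset.sum_sub_distrib, ← Finset.sum_add_distrib]
        apply Finset.sum_congr rfl; intro j _
        simp [signMatrix]
    _ ≤ ∑ i, ∑ j, |(S₀ - H) i j| :=
        Finset.sum_le_sum fun i _ => Finset.sum_le_sum fun j _ => key i j
    _ = l1Norm (S₀ - H) := rfl

lemma frobInner_F_bound {F H : Matrix (Fin n) (Fin n) ℝ}
    (hFΩ : projSupp Ω F = 0) (hFnorm : ∀ i j, |F i j| ≤ 1/2) :
    -frobInner F H ≤ 1/2 * l1Norm (H - projSupp Ω H) := by
  rw [frobInner_eq_sum, l1Norm, Finset.mul_sum, ← Finset.sum_neg_distrib]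
  apply Finset.sum_le_sum; intro i _
  rw [Finset.mul_sum, ← Finset.sum_neg_distrib]
  apply Finset.sum_le_sum; intro j _
  rw [Matrix.sub_apply, projSupp_apply]
  by_cases h : (i, j) ∈ Ω
  · have hF0 : F i j = 0 := by
      have := congrFun (congrFun hFΩ i) j
      rwa [projSupp_apply, if_pos h, Matrix.zero_apply] at this
    rw [hF0, if_pos h]
    simp
  · rw [if_neg h, sub_zero]
    calc -(F i j * H i j) ≤ |F i j * H i j| := neg_le_abs _
      _ = |F i j| * |H i j| := abs_mul _ _
      _ ≤ 1/2 * |H i j| := mul_le_mul_of_nonneg_right (hFnorm i j) (abs_nonneg _)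

lemma frobInner_Delta_eq {Δ H : Matrix (Fin n) (Fin n) ℝ} (hΔΩ : projSupp Ω Δ = Δ) :
    frobInner Δ H = frobInner Δ (projSupp Ω H) := by
  rw [frobInner_eq_sum, frobInner_eq_sum]
  apply Finset.sum_congr rfl; intro i _
  apply Finset.sum_congr rfl; intro j _
  rw [projSupp_apply]
  by_cases h : (i, j) ∈ Ω
  · rw [if_pos h]
  · rw [if_neg h, mul_zero]
    have hΔ0 : Δ i j = 0 := by
      have := congrFun (congrFun hΔΩ i) j
      rw [projSupp_apply, if_neg h] at this
      exact this.symm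
    rw [hΔ0, zero_mul]

end Omega

end PCP

set_option maxHeartbeats 2000000 in
/-- dual certificate optimality for Principal Component Pursuit. -/
theorem pcp_dual_certificate {n r : ℕ}
    (L₀ S₀ : Matrix (Fin n) (Fin n) ℝ)
    (U V : Matrix (Fin n) (Fin r) ℝ) (Sig : Matrix (Fin r) (Fin r) ℝ)
    (hU : Uᵀ * U = 1) (hV : Vᵀ * V = 1)
    (hSigdiag : ∀ i j, i ≠ j → Sig i j = 0) (hSigpos : ∀ i, 0 < Sig i i)
    (hSVD : L₀ = U * Sig * Vᵀ)
    (Ω : Set (Fin n × Fin n)) [DecidablePred (· ∈ Ω)]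
    (hΩ : Ω = {p : Fin n × Fin n | S₀ p.1 p.2 ≠ 0})
    (lam α ε : ℝ)
    (hα : α ∈ Set.Ioo (0:ℝ) 1) (hε : ε ∈ Set.Ioo (0:ℝ) 1)
    (hlam : 0 < lam) (hlamα : lam < 1 - α)
    (hεq : (1:ℝ)/2 - (1 - ε) * ε > 0) (hαε : (1 - α) - lam * ε > 0)
    -- ‖P_Ω P_T‖ ≤ 1 - ε (as operators in the Frobenius norm)
    (hPP : ∀ M : Matrix (Fin n) (Fin n) ℝ,
      frobNorm (projSupp Ω (projT U V M)) ≤ (1 - ε) * frobNorm M)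
    -- the dual certificate (W, F) and the residual Δ
    (W F Δ : Matrix (Fin n) (Fin n) ℝ)
    (hWT : projT U V W = 0) (hWnorm : matSpectralNorm W ≤ α)
    (hFΩ : projSupp Ω F = 0) (hFnorm : ∀ i j, |F i j| ≤ 1/2)
    (hΔΩ : projSupp Ω Δ = Δ) (hΔF : frobNorm Δ ≤ ε ^ 2)
    (hcert : U * Vᵀ + W = lam • (signMatrix S₀ + F + Δ)) :
    ∀ L S : Matrix (Fin n) (Fin n) ℝ, L + S = L₀ + S₀ →
      (L, S) ≠ (L₀, S₀) →
      nuclearNorm L₀ + lam * l1Norm S₀ < nuclearNorm L + lam * l1Norm S := by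
  intro L S hfeas hne
  have key : ∀ H : Matrix (Fin n) (Fin n) ℝ, H ≠ 0 →
      nuclearNorm L₀ + lam * l1Norm S₀
        < nuclearNorm (L₀ + H) + lam * l1Norm (S₀ - H) := by
    intro H hHne
    set Ht := H - projT U V H with hHt
    -- orthogonality facts
    have hUHt : Uᵀ * Ht = 0 := PCP.projT_left hU H
    have hHtV : Ht * V = 0 := PCP.projT_right hV H
    have hUW₀ : Uᵀ * PCP.dualMat Ht = 0 := PCP.dualMat_left_zero Ht U hUHt
    have hW₀V : PCP.dualMat Ht * V = 0 := PCP.dualMat_right_zero Ht V hHtV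
    have hUW : Uᵀ * W = 0 := by
      have := PCP.projT_left (V := V) hU W
      rwa [hWT, sub_zero] at this
    have hWV : W * V = 0 := by
      have := PCP.projT_right (U := U) hV W
      rwa [hWT, sub_zero] at this
    have hd : projT U V H + Ht = H := by rw [hHt]; abel
    -- (i) nuclear norm subgradient inequality
    have hYL0 : frobInner (U * Vᵀ + PCP.dualMat Ht) L₀ = nuclearNorm L₀ := by
      rw [PCP.frobInner_add_left]
      have h1 : frobInner (PCP.dualMat Ht) L₀ = 0 := by
        rw [hSVD, Matrix.mul_assoc]
        exact PCP.frobInner_mul_left_zero hUW₀ _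
      have h2 : frobInner (U * Vᵀ) L₀ = Matrix.trace Sig := by
        rw [hSVD]; exact PCP.frobInner_UVt hU hV Sig
      have h3 : nuclearNorm L₀ = Matrix.trace Sig := by
        rw [hSVD]; exact PCP.nuclearNorm_USVt hU hV Sig hSigdiag (fun i => (hSigpos i).le)
      rw [h1, h2, h3, add_zero]
    have hW₀H : frobInner (PCP.dualMat Ht) H = nuclearNorm Ht := by
      rw [← hd, PCP.frobInner_add_right, PCP.frobInner_projT_zero hUW₀ hW₀V,
        PCP.frobInner_dualMat, zero_add]
    have ha1 : nuclearNorm L₀ + frobInner (U * Vᵀ) H + nuclearNorm Ht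
        ≤ nuclearNorm (L₀ + H) := by
      have hspecY : matSpectralNorm (U * Vᵀ + PCP.dualMat Ht) ≤ 1 :=
        PCP.spec_UVt_add_le_one hU hV hUW₀ hW₀V (PCP.spec_dualMat_le_one Ht)
      have hle : frobInner (U * Vᵀ + PCP.dualMat Ht) (L₀ + H) ≤ nuclearNorm (L₀ + H) := by
        calc frobInner (U * Vᵀ + PCP.dualMat Ht) (L₀ + H)
            ≤ matSpectralNorm (U * Vᵀ + PCP.dualMat Ht) * nuclearNorm (L₀ + H) :=
              PCP.frobInner_le_spec_mul_nuclear _ _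
          _ ≤ 1 * nuclearNorm (L₀ + H) :=
              mul_le_mul_of_nonneg_right hspecY (PCP.nuclearNorm_nonneg _)
          _ = nuclearNorm (L₀ + H) := one_mul _
      have heq : frobInner (U * Vᵀ + PCP.dualMat Ht) (L₀ + H)
          = nuclearNorm L₀ + frobInner (U * Vᵀ) H + nuclearNorm Ht := by
        rw [PCP.frobInner_add_right, hYL0, PCP.frobInner_add_left, hW₀H]
        ring
      linarith
    -- (ii) ℓ¹ subgradient inequality
    have ha2 : l1Norm S₀ - frobInner (signMatrix S₀) H + l1Norm (H - projSupp Ω H)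
        ≤ l1Norm (S₀ - H) := PCP.l1_subgradient hΩ H
    -- (iii) certificate identity
    have ha3 : frobInner (U * Vᵀ) H
        = lam * frobInner (signMatrix S₀) H + lam * frobInner F H + lam * frobInner Δ H
          - frobInner W H := by
      have hc : frobInner (U * Vᵀ) H + frobInner W H
          = lam * frobInner (signMatrix S₀ + F + Δ) H := by
        rw [← PCP.frobInner_add_left, hcert, PCP.frobInner_smul_left]
      rw [PCP.frobInner_add_left, PCP.frobInner_add_left] at hc
      linarith
    -- (iv) bound on ⟨W, H⟩
    have ha4 : frobInner W H ≤ α * nuclearNorm Ht := by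
      have h1 : frobInner W H = frobInner W Ht := by
        rw [← hd, PCP.frobInner_add_right, PCP.frobInner_projT_zero hUW hWV, zero_add]
      rw [h1]
      calc frobInner W Ht ≤ matSpectralNorm W * nuclearNorm Ht :=
            PCP.frobInner_le_spec_mul_nuclear _ _
        _ ≤ α * nuclearNorm Ht :=
            mul_le_mul_of_nonneg_right hWnorm (PCP.nuclearNorm_nonneg _)
    -- (v) bound on ⟨F, H⟩
    have ha5 : -frobInner F H ≤ 1/2 * l1Norm (H - projSupp Ω H) :=
      PCP.frobInner_F_bound hFΩ hFnorm
    -- (vi) bound on ⟨Δ, H⟩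
    have ha6 : -frobInner Δ H ≤ ε ^ 2 * frobNorm (projSupp Ω H) := by
      rw [PCP.frobInner_Delta_eq hΔΩ]
      calc -frobInner Δ (projSupp Ω H)
          ≤ frobNorm Δ * frobNorm (projSupp Ω H) := PCP.neg_frobInner_le _ _
        _ ≤ ε ^ 2 * frobNorm (projSupp Ω H) :=
            mul_le_mul_of_nonneg_right hΔF (PCP.frobNorm_nonneg _)
    -- norm comparison inequalities
    have ha7 : frobNorm (projSupp Ω H) ≤ (1 - ε) * frobNorm H + frobNorm Ht := by
      have hsplit : projSupp Ω H = projSupp Ω (projT U V H) + projSupp Ω Ht := by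
        rw [← PCP.projSupp_add, hd]
      rw [hsplit]
      calc frobNorm (projSupp Ω (projT U V H) + projSupp Ω Ht)
          ≤ frobNorm (projSupp Ω (projT U V H)) + frobNorm (projSupp Ω Ht) :=
            PCP.frobNorm_triangle _ _
        _ ≤ (1 - ε) * frobNorm H + frobNorm Ht :=
            add_le_add (hPP H) (PCP.frobNorm_projSupp_le _)
    have ha8 : frobNorm H ≤ frobNorm (projSupp Ω H) + frobNorm (H - projSupp Ω H) := by
      have : projSupp Ω H + (H - projSupp Ω H) = H := by abel
      calc frobNorm H = frobNorm (projSupp Ω H + (H - projSupp Ω H)) := by rw [this]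
        _ ≤ _ := PCP.frobNorm_triangle _ _
    have ha9 : frobNorm (H - projSupp Ω H) ≤ l1Norm (H - projSupp Ω H) :=
      PCP.frobNorm_le_l1Norm _
    have ha10 : frobNorm Ht ≤ nuclearNorm Ht := PCP.frobNorm_le_nuclearNorm _
    -- abbreviations
    have hb0 : 0 ≤ l1Norm (H - projSupp Ω H) := PCP.l1Norm_nonneg _
    have ha0 : 0 ≤ nuclearNorm Ht := PCP.nuclearNorm_nonneg _
    have hf0 : 0 ≤ frobNorm (projSupp Ω H) := PCP.frobNorm_nonneg _
    have hh0 : 0 ≤ frobNorm H := PCP.frobNorm_nonneg _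
    have ht0 : 0 ≤ frobNorm Ht := PCP.frobNorm_nonneg _
    -- ε f ≤ (1-ε) b + a
    have hef : ε * frobNorm (projSupp Ω H)
        ≤ (1 - ε) * l1Norm (H - projSupp Ω H) + nuclearNorm Ht := by
      have h1 : (1 - ε) * frobNorm H
          ≤ (1 - ε) * (frobNorm (projSupp Ω H) + frobNorm (H - projSupp Ω H)) :=
        mul_le_mul_of_nonneg_left ha8 (by linarith [hε.2])
      have h2 : (1 - ε) * frobNorm (H - projSupp Ω H)
          ≤ (1 - ε) * l1Norm (H - projSupp Ω H) :=
        mul_le_mul_of_nonneg_left ha9 (by linarith [hε.2])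
      nlinarith [ha7, ha10]
    -- multiplied inequalities
    have hm1 : lam * (l1Norm S₀ - frobInner (signMatrix S₀) H
        + l1Norm (H - projSupp Ω H)) ≤ lam * l1Norm (S₀ - H) :=
      mul_le_mul_of_nonneg_left ha2 hlam.le
    have hm2 : lam * (-frobInner F H) ≤ lam * (1/2 * l1Norm (H - projSupp Ω H)) :=
      mul_le_mul_of_nonneg_left ha5 hlam.le
    have hm3 : lam * (-frobInner Δ H) ≤ lam * (ε ^ 2 * frobNorm (projSupp Ω H)) :=
      mul_le_mul_of_nonneg_left ha6 hlam.le
    have hm4 : lam * ε * (ε * frobNorm (projSupp Ω H))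
        ≤ lam * ε * ((1 - ε) * l1Norm (H - projSupp Ω H) + nuclearNorm Ht) :=
      mul_le_mul_of_nonneg_left hef (mul_nonneg hlam.le hε.1.le)
    -- strict positivity of the gap
    have hgap : 0 < (1 - α - lam * ε) * nuclearNorm Ht
        + lam * (1/2 - (1 - ε) * ε) * l1Norm (H - projSupp Ω H) := by
      have hcoef1 : 0 < 1 - α - lam * ε := by linarith
      have hcoef2 : 0 < lam * (1/2 - (1 - ε) * ε) := mul_pos hlam hεq
      have hpos : 0 < nuclearNorm Ht ∨ 0 < l1Norm (H - projSupp Ω H) := by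
        by_contra hcon
        push_neg at hcon
        obtain ⟨hA, hB⟩ := hcon
        have haz : nuclearNorm Ht = 0 := le_antisymm hA ha0
        have hbz : l1Norm (H - projSupp Ω H) = 0 := le_antisymm hB hb0
        have htz : frobNorm Ht = 0 := le_antisymm (haz ▸ ha10) ht0
        have hgz : frobNorm (H - projSupp Ω H) = 0 :=
          le_antisymm (le_trans ha9 (le_of_eq hbz)) (PCP.frobNorm_nonneg _)
        have hH0 : frobNorm H = 0 := by
          by_contra hne0
          have hhpos : 0 < frobNorm H := lt_of_le_of_ne hh0 (Ne.symm hne0)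
          have h1 : frobNorm H ≤ (1 - ε) * frobNorm H := by
            calc frobNorm H
                ≤ frobNorm (projSupp Ω H) + frobNorm (H - projSupp Ω H) := ha8
              _ = frobNorm (projSupp Ω H) := by rw [hgz, add_zero]
              _ ≤ (1 - ε) * frobNorm H + frobNorm Ht := ha7
              _ = (1 - ε) * frobNorm H := by rw [htz, add_zero]
          nlinarith [hε.1]
        exact hHne (PCP.frobNorm_eq_zero hH0)
      rcases hpos with hA | hB
      · have h1 : 0 < (1 - α - lam * ε) * nuclearNorm Ht := mul_pos hcoef1 hA
        have h2 : 0 ≤ lam * (1/2 - (1 - ε) * ε) * l1Norm (H - projSupp Ω H) :=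
          mul_nonneg hcoef2.le hb0
        linarith
      · have h1 : 0 ≤ (1 - α - lam * ε) * nuclearNorm Ht := mul_nonneg hcoef1.le ha0
        have h2 : 0 < lam * (1/2 - (1 - ε) * ε) * l1Norm (H - projSupp Ω H) :=
          mul_pos hcoef2 hB
        linarith
    linarith [ha1, hm1, ha3, ha4, hm2, hm3, hm4, hgap]
  -- apply the key inequality with H = L - L₀
  have hS : S = S₀ - (L - L₀) := by
    have h1 : S₀ - (L - L₀) = (L₀ + S₀) - L := by abel
    rw [h1, ← hfeas]; abel
  have hne' : L - L₀ ≠ 0 := by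
    intro h0
    have hL0 : L = L₀ := by rwa [sub_eq_zero] at h0
    have hS0 : S = S₀ := by rw [hS, h0, sub_zero]
    exact hne (by rw [hL0, hS0])
  calc nuclearNorm L₀ + lam * l1Norm S₀
      < nuclearNorm (L₀ + (L - L₀)) + lam * l1Norm (S₀ - (L - L₀)) := key _ hne'
    _ = nuclearNorm L + lam * l1Norm S := by
        rw [← hS]
        congr 2
        abel
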